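/- arXiv:2202.07292 — 2 statements merged into one kernel-verified Lean document; each statement's English description precedes it below -/
import Mathlib

section
/- For the linear model f(x) = Σᵢ wᵢ xᵢ with all weights wᵢ > 0 and inputs restricted to [0,1]ⁿ, the Contextual Importance of the single feature k relative to all features equals wₖ / (Σᵢ wᵢ), independently of the context C. -/
/-- For the linear model f(x) = Σ wᵢ xᵢ with wᵢ > 0 on [0,1]ⁿ,
the Contextual Importance of feature k equals wₖ / Σ wᵢ. -/
theorem ci_linear_model
    (n : ℕ) (w : Fin n → ℝ) (hw : ∀ i, w i > 0)
    (f : (Fin n → ℝ) → ℝ) (hf : ∀ x, f x = ∑ i, w i * x i)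
    (C : Fin n → ℝ) (hC : ∀ j, C j ∈ Set.Icc (0 : ℝ) 1)
    (k : Fin n)
    (Ek : Set (Fin n → ℝ))
    (hEk : Ek = {x | (∀ j, x j ∈ Set.Icc (0 : ℝ) 1) ∧ ∀ j ≠ k, x j = C j})
    (Eall : Set (Fin n → ℝ))
    (hEall : Eall = {x | ∀ j, x j ∈ Set.Icc (0 : ℝ) 1}) :
    (sSup (f '' Ek) - sInf (f '' Ek)) / (sSup (f '' Eall) - sInf (f '' Eall)) =
      w k / ∑ i, w i := by
  set c : ℝ := ∑ i ∈ Finset.univ.erase k, w i * C i with hc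
  have hsplit : ∀ x : Fin n → ℝ, (∀ j ≠ k, x j = C j) →
      f x = w k * x k + c := by
    intro x hx
    rw [hf, ← Finset.add_sum_erase _ _ (Finset.mem_univ k)]
    congr 1
    exact Finset.sum_congr rfl fun i hi => by
      rw [hx i (Finset.ne_of_mem_erase hi)]
  -- points of Ek
  have hmem : ∀ t ∈ Set.Icc (0:ℝ) 1, Function.update C k t ∈ Ek := by
    intro t ht
    rw [hEk]
    refine ⟨fun j => ?_, fun j hj => Function.update_of_ne hj t C⟩
    rcases eq_or_ne j k with rfl | hj
    · simpa using ht
    · rw [Function.update_of_ne hj]; exact hC j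
  have hval : ∀ t : ℝ, f (Function.update C k t) = w k * t + c := by
    intro t
    rw [hsplit _ (fun j hj => Function.update_of_ne hj t C), Function.update_self]
  have hsupk : IsGreatest (f '' Ek) (w k * 1 + c) := by
    constructor
    · exact ⟨_, hmem 1 ⟨zero_le_one, le_refl 1⟩, hval 1⟩
    · rintro y ⟨x, hx, rfl⟩
      rw [hEk] at hx
      rw [hsplit x hx.2]
      have := (hx.1 k).2
      nlinarith [hw k]
  have hinfk : IsLeast (f '' Ek) (w k * 0 + c) := by
    constructor
    · exact ⟨_, hmem 0 ⟨le_refl 0, zero_le_one⟩, hval 0⟩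
    · rintro y ⟨x, hx, rfl⟩
      rw [hEk] at hx
      rw [hsplit x hx.2]
      have := (hx.1 k).1
      nlinarith [hw k]
  have hsupa : IsGreatest (f '' Eall) (∑ i, w i) := by
    constructor
    · refine ⟨fun _ => 1, ?_, by simp [hf]⟩
      rw [hEall]; intro j; exact ⟨zero_le_one, le_refl 1⟩
    · rintro y ⟨x, hx, rfl⟩
      rw [hEall] at hx
      rw [hf]
      exact Finset.sum_le_sum fun i _ => by nlinarith [hw i, (hx i).1, (hx i).2]
  have hinfa : IsLeast (f '' Eall) 0 := by
    constructor
    · refine ⟨fun _ => 0, ?_, by simp [hf]⟩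
      rw [hEall]; intro j; exact ⟨le_refl 0, zero_le_one⟩
    · rintro y ⟨x, hx, rfl⟩
      rw [hEall] at hx
      rw [hf]
      exact Finset.sum_nonneg fun i _ => by nlinarith [hw i, (hx i).1, (hx i).2]
  rw [hsupk.csSup_eq, hinfk.csInf_eq, hsupa.csSup_eq, hinfa.csInf_eq]
  ring_nf
end

section
/- For the linear model f(x) = Σᵢ wᵢ xᵢ with wᵢ > 0 and inputs in [0,1]ⁿ with utility u = identity, the Contextual Utility of feature k at context C equals Cₖ, the current value of that feature. -/
/-- For the linear model with positive weights on [0,1]ⁿ and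
identity utility, the Contextual Utility of feature k equals Cₖ. -/
theorem cu_linear_model
    (n : ℕ) (w : Fin n → ℝ) (hw : ∀ i, w i > 0)
    (f : (Fin n → ℝ) → ℝ) (hf : ∀ x, f x = ∑ i, w i * x i)
    (C : Fin n → ℝ) (hC : ∀ j, C j ∈ Set.Icc (0 : ℝ) 1)
    (k : Fin n)
    (Ek : Set (Fin n → ℝ))
    (hEk : Ek = {x | (∀ j, x j ∈ Set.Icc (0 : ℝ) 1) ∧ ∀ j ≠ k, x j = C j}) :
    (f C - sInf (f '' Ek)) / (sSup (f '' Ek) - sInf (f '' Ek)) = C k := by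
  set a : ℝ := ∑ j ∈ Finset.univ.erase k, w j * C j with ha
  have hwk : w k > 0 := hw k
  have hsplit : ∀ x : Fin n → ℝ, (∀ j ≠ k, x j = C j) →
      f x = a + w k * x k := by
    intro x hx
    rw [hf]
    rw [← Finset.sum_erase_add _ _ (Finset.mem_univ k)]
    congr 1
    apply Finset.sum_congr rfl
    intro j hj
    rw [hx j (Finset.ne_of_mem_erase hj)]
  have himg : f '' Ek = Set.Icc a (a + w k) := by
    ext y
    constructor
    · rintro ⟨x, hx, rfl⟩
      rw [hEk] at hx
      obtain ⟨hx1, hx2⟩ := hx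
      rw [hsplit x hx2]
      obtain ⟨h0, h1⟩ := hx1 k
      constructor
      · nlinarith
      · nlinarith
    · rintro ⟨h1, h2⟩
      refine ⟨Function.update C k ((y - a) / w k), ?_, ?_⟩
      · rw [hEk]
        constructor
        · intro j
          by_cases hjk : j = k
          · subst hjk
            rw [Function.update_self]
            constructor
            · exact div_nonneg (by linarith) hwk.le
            · rw [div_le_one hwk]; linarith
          · rw [Function.update_of_ne hjk]; exact hC j
        · intro j hj
          rw [Function.update_of_ne hj]
      · rw [hsplit _ (fun j hj => Function.update_of_ne hj _ _),
          Function.update_self]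
        field_simp
        ring
  have hle : a ≤ a + w k := by linarith
  rw [himg, csInf_Icc hle, csSup_Icc hle, hsplit C (fun _ _ => rfl)]
  have hCk := hC k
  field_simp
  rw [add_sub_cancel_left, add_sub_cancel_left, mul_div_cancel_left₀ _ hwk.ne']
end
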